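/- Let h > 0, κ > 0, and let r : [−h,h] → ℝ be twice continuously differentiable with r(−h) = r(h) = 1 and 0 < r(t) < 1 for t ∈ (−h,h), satisfying 4·r·r'' − 4·(r')² − (1 − r⁴) = 0 on (−h,h) and (1−r²)²/(4r²) + (r'/r)² = κ² on (−h,h). Let n ≥ 2 be an integer. If u : [−h,h] → ℝ is continuous on [−h,h], twice differentiable on (−h,h), satisfies u''(t) + ((1/2)(1/r(t)² + r(t)²) − κ²n²)·u(t) = 0 on (−h,h) and u(−h) = u(h) = 0, then u is identically zero. -/

import Mathlib

open Set Filter Topology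

set_option maxHeartbeats 1000000 in

lemma jacobi_key
    (h κ : ℝ) (hh : 0 < h) (hκ : 0 < κ) (n : ℕ) (hn : 2 ≤ n)
    (r r' r'' : ℝ → ℝ)
    (hrderiv : ∀ t ∈ Set.Icc (-h) h, HasDerivWithinAt r (r' t) (Set.Icc (-h) h) t)
    (hrderiv' : ∀ t ∈ Set.Icc (-h) h, HasDerivWithinAt r' (r'' t) (Set.Icc (-h) h) t)
    (hbv₁ : r (-h) = 1) (hbv₂ : r h = 1)
    (hrange : ∀ t ∈ Set.Ioo (-h) h, 0 < r t ∧ r t < 1)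
    (hode : ∀ t ∈ Set.Ioo (-h) h,
      4 * r t * r'' t - 4 * (r' t) ^ 2 - (1 - (r t) ^ 4) = 0)
    (hfirst : ∀ t ∈ Set.Ioo (-h) h,
      (1 - (r t) ^ 2) ^ 2 / (4 * (r t) ^ 2) + (r' t / r t) ^ 2 = κ ^ 2)
    (u u' u'' : ℝ → ℝ)
    (hucont : ContinuousOn u (Set.Icc (-h) h))
    (huderiv : ∀ t ∈ Set.Ioo (-h) h, HasDerivAt u (u' t) t)
    (huderiv' : ∀ t ∈ Set.Ioo (-h) h, HasDerivAt u' (u'' t) t)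
    (hueq : ∀ t ∈ Set.Ioo (-h) h,
      u'' t + ((1 / 2) * (1 / (r t) ^ 2 + (r t) ^ 2) - κ ^ 2 * (n : ℝ) ^ 2) * u t = 0)
    (hu₁ : u (-h) = 0) (hu₂ : u h = 0)
    (t₀ : ℝ) (ht₀ : t₀ ∈ Set.Ioo (-h) h) (hpos : 0 < u t₀) : False := by
  have hIooIcc : Set.Ioo (-h) h ⊆ Set.Icc (-h) h := Set.Ioo_subset_Icc_self
  have hmh : (-h : ℝ) < h := by linarith
  have hmhm : (-h : ℝ) ∈ Set.Icc (-h) h := ⟨le_refl _, hmh.le⟩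
  have hhm : (h : ℝ) ∈ Set.Icc (-h) h := ⟨hmh.le, le_refl _⟩
  -- positivity of r on the closed interval
  have hrpos : ∀ t ∈ Set.Icc (-h) h, 0 < r t := by
    intro t ht
    rcases eq_or_lt_of_le ht.1 with h1 | h1
    · rw [← h1, hbv₁]; norm_num
    rcases eq_or_lt_of_le ht.2 with h2 | h2
    · rw [h2, hbv₂]; norm_num
    · exact (hrange t ⟨h1, h2⟩).1
  have hrne : ∀ t ∈ Set.Icc (-h) h, r t ≠ 0 := fun t ht => (hrpos t ht).ne'
  -- continuity
  have hrcont : ContinuousOn r (Set.Icc (-h) h) := fun t ht => (hrderiv t ht).continuousWithinAt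
  have hr'cont : ContinuousOn r' (Set.Icc (-h) h) := fun t ht => (hrderiv' t ht).continuousWithinAt
  -- interior derivatives of r
  have hrD : ∀ t ∈ Set.Ioo (-h) h, HasDerivAt r (r' t) t := fun t ht =>
    (hrderiv t (hIooIcc ht)).hasDerivAt (Icc_mem_nhds ht.1 ht.2)
  have hrD' : ∀ t ∈ Set.Ioo (-h) h, HasDerivAt r' (r'' t) t := fun t ht =>
    (hrderiv' t (hIooIcc ht)).hasDerivAt (Icc_mem_nhds ht.1 ht.2)
  -- comparison solution
  set φ : ℝ → ℝ := fun t => (r t)⁻¹ - r t with hφdef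
  set φd : ℝ → ℝ := fun t => -r' t / r t ^ 2 - r' t with hφddef
  set φdd : ℝ → ℝ := fun t => -r'' t / r t ^ 2 + 2 * (r' t) ^ 2 / r t ^ 3 - r'' t with hφdddef
  have hφm : φ (-h) = 0 := by simp [hφdef, hbv₁]
  have hφh : φ h = 0 := by simp [hφdef, hbv₂]
  have hφpos : ∀ t ∈ Set.Ioo (-h) h, 0 < φ t := by
    intro t ht
    obtain ⟨h0, h1⟩ := hrange t ht
    have : r t < (r t)⁻¹ := by
      rw [(one_div (r t)).symm, lt_div_iff₀ h0]; nlinarith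
    simpa [hφdef] using sub_pos.mpr this
  have hφD : ∀ t ∈ Set.Ioo (-h) h, HasDerivAt φ (φd t) t := by
    intro t ht
    have hne := hrne t (hIooIcc ht)
    have := ((hrD t ht).inv hne).sub (hrD t ht)
    exact this
  have hφDD : ∀ t ∈ Set.Ioo (-h) h, HasDerivAt φd (φdd t) t := by
    intro t ht
    have hne := hrne t (hIooIcc ht)
    have h2 : HasDerivAt (fun s => r s ^ 2) ((2 : ℕ) * r t ^ 1 * r' t) t := (hrD t ht).pow 2
    have := (((hrD' t ht).neg).div h2 (pow_ne_zero 2 hne)).sub (hrD' t ht)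
    refine this.congr_deriv ?_
    simp only [hφdddef, Pi.neg_apply]
    field_simp
    ring
  -- the comparison ODE for φ
  have hφeq : ∀ t ∈ Set.Ioo (-h) h,
      φdd t + ((1 / 2) * (1 / (r t) ^ 2 + (r t) ^ 2) - κ ^ 2) * φ t = 0 := by
    intro t ht
    have hne := hrne t (hIooIcc ht)
    have hO := hode t ht
    have hF := hfirst t ht
    have h'' : r'' t = (4 * (r' t) ^ 2 + 1 - (r t) ^ 4) / (4 * r t) := by
      field_simp
      linarith
    rw [← hF]
    simp only [hφdddef, hφdef]
    rw [h'']
    field_simp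
    ring
  -- Wronskian
  set W : ℝ → ℝ := fun t => u' t * φ t - u t * φd t with hWdef
  have hWD : ∀ t ∈ Set.Ioo (-h) h,
      HasDerivAt W (κ ^ 2 * ((n : ℝ) ^ 2 - 1) * (u t * φ t)) t := by
    intro t ht
    have := ((huderiv' t ht).mul (hφD t ht)).sub ((huderiv t ht).mul (hφDD t ht))
    refine this.congr_deriv ?_
    have e1 : u'' t = -((1 / 2) * (1 / (r t) ^ 2 + (r t) ^ 2) - κ ^ 2 * (n : ℝ) ^ 2) * u t := by
      have := hueq t ht; linarith
    have e2 : φdd t = -((1 / 2) * (1 / (r t) ^ 2 + (r t) ^ 2) - κ ^ 2) * φ t := by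
      have := hφeq t ht; linarith
    rw [e1, e2]; ring
  -- bound on u'' and hence Lipschitz bound on u'
  have hQucont : ContinuousOn
      (fun t => ((1 / 2) * (1 / (r t) ^ 2 + (r t) ^ 2) - κ ^ 2 * (n : ℝ) ^ 2) * u t)
      (Set.Icc (-h) h) := by
    apply ContinuousOn.mul _ hucont
    apply ContinuousOn.sub _ continuousOn_const
    apply ContinuousOn.mul continuousOn_const
    exact (continuousOn_const.div (hrcont.pow 2)
      (fun t ht => pow_ne_zero 2 (hrne t ht))).add (hrcont.pow 2)
  obtain ⟨M, hM⟩ := isCompact_Icc.exists_bound_of_continuousOn hQucont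
  have hM0 : 0 ≤ M := le_trans (norm_nonneg _) (hM (-h) hmhm)
  have hu''bd : ∀ t ∈ Set.Ioo (-h) h, ‖u'' t‖ ≤ M := by
    intro t ht
    have e1 : u'' t
        = -(((1 / 2) * (1 / (r t) ^ 2 + (r t) ^ 2) - κ ^ 2 * (n : ℝ) ^ 2) * u t) := by
      have := hueq t ht; linarith
    rw [e1, norm_neg]
    exact hM t (hIooIcc ht)
  have h0mem : (0 : ℝ) ∈ Set.Ioo (-h) h := ⟨by linarith, hh⟩
  set C : ℝ := |u' 0| + M * (2 * h) with hCdef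
  have hu'bd : ∀ t ∈ Set.Ioo (-h) h, |u' t| ≤ C := by
    intro t ht
    have hlip := (convex_Ioo (-h) h).norm_image_sub_le_of_norm_hasDerivWithin_le
      (fun x hx => (huderiv' x hx).hasDerivWithinAt) hu''bd h0mem ht
    rw [Real.norm_eq_abs, Real.norm_eq_abs] at hlip
    have h1 : |t - 0| ≤ 2 * h := by
      rw [sub_zero, abs_le]; constructor <;> linarith [ht.1, ht.2]
    have h2 : |u' t - u' 0| ≤ M * (2 * h) :=
      le_trans hlip (mul_le_mul_of_nonneg_left h1 hM0)
    calc |u' t| = |u' 0 + (u' t - u' 0)| := by ring_nf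
      _ ≤ |u' 0| + |u' t - u' 0| := abs_add_le _ _
      _ ≤ C := by rw [hCdef]; linarith
  -- continuity of φ, φd on the closed interval
  have hφcont : ContinuousOn φ (Set.Icc (-h) h) := (hrcont.inv₀ hrne).sub hrcont
  have hφdcont : ContinuousOn φd (Set.Icc (-h) h) :=
    ((hr'cont.neg).div (hrcont.pow 2) (fun t ht => pow_ne_zero 2 (hrne t ht))).sub hr'cont
  -- boundary limits of the Wronskian
  have hWlim_left : Filter.Tendsto W (nhdsWithin (-h) (Set.Ioi (-h))) (nhds 0) := by
    have hfil : nhdsWithin (-h) (Set.Ioi (-h)) ≤ nhdsWithin (-h) (Set.Icc (-h) h) := by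
      rw [← nhdsWithin_Ioc_eq_nhdsGT hmh]
      exact nhdsWithin_mono _ Set.Ioc_subset_Icc_self
    have hu0 : Filter.Tendsto u (nhdsWithin (-h) (Set.Ioi (-h))) (nhds 0) := by
      have h1 : Filter.Tendsto u (nhdsWithin (-h) (Set.Icc (-h) h)) (nhds (u (-h))) :=
        hucont (-h) hmhm
      rw [hu₁] at h1
      exact h1.mono_left hfil
    have h2 : Filter.Tendsto (fun t => u t * φd t) (nhdsWithin (-h) (Set.Ioi (-h))) (nhds 0) := by
      have hφd0 : Filter.Tendsto φd (nhdsWithin (-h) (Set.Ioi (-h))) (nhds (φd (-h))) :=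
        (hφdcont (-h) hmhm).mono_left hfil
      simpa using hu0.mul hφd0
    have h1 : Filter.Tendsto (fun t => u' t * φ t) (nhdsWithin (-h) (Set.Ioi (-h))) (nhds 0) := by
      apply squeeze_zero_norm' (a := fun t => C * |φ t|)
      · filter_upwards [Ioo_mem_nhdsGT_of_mem ⟨le_refl (-h), hmh⟩] with t ht
        rw [Real.norm_eq_abs, abs_mul]
        exact mul_le_mul_of_nonneg_right (hu'bd t ht) (abs_nonneg _)
      · have hφ0 : Filter.Tendsto φ (nhdsWithin (-h) (Set.Ioi (-h))) (nhds (φ (-h))) :=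
          (hφcont (-h) hmhm).mono_left hfil
        rw [hφm] at hφ0
        have := (tendsto_const_nhds (x := C) (f := nhdsWithin (-h) (Set.Ioi (-h)))).mul hφ0.abs
        simpa using this
    simpa using h1.sub h2
  have hWlim_right : Filter.Tendsto W (nhdsWithin h (Set.Iio h)) (nhds 0) := by
    have hfil : nhdsWithin h (Set.Iio h) ≤ nhdsWithin h (Set.Icc (-h) h) := by
      rw [← nhdsWithin_Ico_eq_nhdsLT hmh]
      exact nhdsWithin_mono _ Set.Ico_subset_Icc_self
    have hu0 : Filter.Tendsto u (nhdsWithin h (Set.Iio h)) (nhds 0) := by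
      have h1 : Filter.Tendsto u (nhdsWithin h (Set.Icc (-h) h)) (nhds (u h)) :=
        hucont h hhm
      rw [hu₂] at h1
      exact h1.mono_left hfil
    have h2 : Filter.Tendsto (fun t => u t * φd t) (nhdsWithin h (Set.Iio h)) (nhds 0) := by
      have hφd0 : Filter.Tendsto φd (nhdsWithin h (Set.Iio h)) (nhds (φd h)) :=
        (hφdcont h hhm).mono_left hfil
      simpa using hu0.mul hφd0
    have h1 : Filter.Tendsto (fun t => u' t * φ t) (nhdsWithin h (Set.Iio h)) (nhds 0) := by
      apply squeeze_zero_norm' (a := fun t => C * |φ t|)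
      · filter_upwards [Ioo_mem_nhdsLT_of_mem ⟨hmh, le_refl h⟩] with t ht
        rw [Real.norm_eq_abs, abs_mul]
        exact mul_le_mul_of_nonneg_right (hu'bd t ht) (abs_nonneg _)
      · have hφ0 : Filter.Tendsto φ (nhdsWithin h (Set.Iio h)) (nhds (φ h)) :=
          (hφcont h hhm).mono_left hfil
        rw [hφh] at hφ0
        have := (tendsto_const_nhds (x := C) (f := nhdsWithin h (Set.Iio h))).mul hφ0.abs
        simpa using this
    simpa using h1.sub h2
  -- the maximal interval of positivity around t₀
  set S : Set ℝ := Set.Icc (-h) h ∩ u ⁻¹' {0} with hSdef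
  have hSclosed : IsClosed S :=
    hucont.preimage_isClosed_of_isClosed isClosed_Icc isClosed_singleton
  set Za := S ∩ Set.Iic t₀ with hZadef
  set Zb := S ∩ Set.Ici t₀ with hZbdef
  have hmA : (-h) ∈ Za := ⟨⟨hmhm, hu₁⟩, ht₀.1.le⟩
  have hhB : h ∈ Zb := ⟨⟨hhm, hu₂⟩, ht₀.2.le⟩
  have hZabdd : BddAbove Za := ⟨t₀, fun x hx => hx.2⟩
  have hZbbdd : BddBelow Zb := ⟨t₀, fun x hx => hx.2⟩
  set a := sSup Za with hadef
  set b := sInf Zb with hbdef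
  have haZ : a ∈ Za := (hSclosed.inter isClosed_Iic).csSup_mem ⟨_, hmA⟩ hZabdd
  have hbZ : b ∈ Zb := (hSclosed.inter isClosed_Ici).csInf_mem ⟨_, hhB⟩ hZbbdd
  have hua : u a = 0 := haZ.1.2
  have hub : u b = 0 := hbZ.1.2
  have ha1 : -h ≤ a := haZ.1.1.1
  have hb1 : b ≤ h := hbZ.1.1.2
  have hat : a < t₀ := lt_of_le_of_ne haZ.2 (fun he => by rw [he] at hua; linarith)
  have htb : t₀ < b := lt_of_le_of_ne hbZ.2 (fun he => by rw [← he] at hub; linarith)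
  have hab : a < b := hat.trans htb
  have ht₀ab : t₀ ∈ Set.Ioo a b := ⟨hat, htb⟩
  have hsubIoo : Set.Ioo a b ⊆ Set.Ioo (-h) h := Set.Ioo_subset_Ioo ha1 hb1
  have hne0 : ∀ s ∈ Set.Ioo a b, u s ≠ 0 := by
    intro s hs hus
    have hsIcc : s ∈ Set.Icc (-h) h := ⟨le_trans ha1 hs.1.le, le_trans hs.2.le hb1⟩
    rcases le_total s t₀ with hst | hst
    · have : s ≤ a := le_csSup hZabdd ⟨⟨hsIcc, hus⟩, hst⟩
      exact absurd this (not_le.mpr hs.1)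
    · have : b ≤ s := csInf_le hZbbdd ⟨⟨hsIcc, hus⟩, hst⟩
      exact absurd this (not_le.mpr hs.2)
  have hupos : ∀ s ∈ Set.Ioo a b, 0 < u s := by
    intro s hs
    rcases lt_or_gt_of_ne (hne0 s hs) with hneg | hposs
    swap
    · exact hposs
    exfalso
    have hsub2 : Set.uIcc s t₀ ⊆ Set.Ioo a b :=
      (Set.ordConnected_Ioo).uIcc_subset hs ht₀ab
    have hcont : ContinuousOn u (Set.uIcc s t₀) :=
      hucont.mono (fun x hx => hIooIcc (hsubIoo (hsub2 hx)))
    have h0mem' : (0 : ℝ) ∈ Set.uIcc (u s) (u t₀) :=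
      Set.mem_uIcc.mpr (Or.inl ⟨hneg.le, hpos.le⟩)
    obtain ⟨c, hc, hc0⟩ := intermediate_value_uIcc hcont h0mem'
    exact hne0 c (hsub2 hc) hc0
  -- W is strictly increasing on (a, b)
  have hn2 : (2 : ℝ) ≤ (n : ℝ) := by exact_mod_cast hn
  have hWmono : StrictMonoOn W (Set.Ioo a b) := by
    apply strictMonoOn_of_deriv_pos (convex_Ioo a b)
    · intro x hx
      exact ((hWD x (hsubIoo hx)).continuousAt).continuousWithinAt
    · intro x hx
      rw [interior_Ioo] at hx
      rw [(hWD x (hsubIoo hx)).deriv]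
      have h1 : (1 : ℝ) < (n : ℝ) ^ 2 := by nlinarith
      have h2 : 0 < u x * φ x := mul_pos (hupos x hx) (hφpos x (hsubIoo hx))
      have h3 : 0 < κ ^ 2 := pow_pos hκ 2
      exact mul_pos (mul_pos h3 (by linarith)) h2
  -- left comparison: W t₀ > 0
  have hWt₀pos : 0 < W t₀ := by
    obtain ⟨L, hL, hL0⟩ : ∃ L, Filter.Tendsto W (nhdsWithin a (Set.Ioi a)) (nhds L) ∧ 0 ≤ L := by
      rcases eq_or_lt_of_le ha1 with hae | hae
      · exact ⟨0, by rw [← hae]; exact hWlim_left, le_refl 0⟩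
      · have haIoo : a ∈ Set.Ioo (-h) h := ⟨hae, lt_of_lt_of_le hab hb1⟩
        refine ⟨W a, ((hWD a haIoo).continuousAt).continuousWithinAt, ?_⟩
        have hu'a : 0 ≤ u' a := by
          have hD := huderiv a haIoo
          rw [hasDerivAt_iff_tendsto_slope] at hD
          have hD2 : Filter.Tendsto (slope u a) (nhdsWithin a (Set.Ioi a)) (nhds (u' a)) :=
            hD.mono_left (nhdsWithin_mono _ (fun x hx => (ne_of_lt hx).symm))
          refine ge_of_tendsto hD2 ?_
          filter_upwards [Ioo_mem_nhdsGT_of_mem ⟨le_refl a, hab⟩] with t ht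
          rw [slope_def_field, hua, sub_zero]
          exact div_nonneg (hupos t ht).le (by linarith [ht.1])
        have : W a = u' a * φ a := by
          simp only [hWdef, hua]; ring
        rw [this]
        exact mul_nonneg hu'a (hφpos a haIoo).le
    set s := (a + t₀) / 2 with hsdef
    have hsab : s ∈ Set.Ioo a b := ⟨by rw [hsdef]; linarith, by rw [hsdef]; linarith⟩
    have hst : s < t₀ := by rw [hsdef]; linarith
    have hLs : L ≤ W s := by
      refine le_of_tendsto hL ?_
      filter_upwards [Ioo_mem_nhdsGT_of_mem ⟨le_refl a, hsab.1⟩] with t ht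
      exact (hWmono ⟨ht.1, lt_trans ht.2 hsab.2⟩ hsab ht.2).le
    have := hWmono hsab ht₀ab hst
    linarith
  -- right comparison: W t₀ < 0
  have hWt₀neg : W t₀ < 0 := by
    obtain ⟨L, hL, hL0⟩ : ∃ L, Filter.Tendsto W (nhdsWithin b (Set.Iio b)) (nhds L) ∧ L ≤ 0 := by
      rcases eq_or_lt_of_le hb1 with hbe | hbe
      · exact ⟨0, by rw [hbe]; exact hWlim_right, le_refl 0⟩
      · have hbIoo : b ∈ Set.Ioo (-h) h := ⟨lt_of_le_of_lt ha1 hab, hbe⟩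
        refine ⟨W b, ((hWD b hbIoo).continuousAt).continuousWithinAt, ?_⟩
        have hu'b : u' b ≤ 0 := by
          have hD := huderiv b hbIoo
          rw [hasDerivAt_iff_tendsto_slope] at hD
          have hD2 : Filter.Tendsto (slope u b) (nhdsWithin b (Set.Iio b)) (nhds (u' b)) :=
            hD.mono_left (nhdsWithin_mono _ (fun x hx => ne_of_lt hx))
          refine le_of_tendsto hD2 ?_
          filter_upwards [Ioo_mem_nhdsLT_of_mem ⟨hab, le_refl b⟩] with t ht
          rw [slope_def_field, hub, sub_zero]
          apply div_nonpos_of_nonneg_of_nonpos (hupos t ht).le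
          linarith [ht.2]
        have : W b = u' b * φ b := by
          simp only [hWdef, hub]; ring
        rw [this]
        exact mul_nonpos_iff.mpr (Or.inr ⟨hu'b, (hφpos b hbIoo).le⟩)
    set s := (t₀ + b) / 2 with hsdef
    have hsab : s ∈ Set.Ioo a b := ⟨by rw [hsdef]; linarith, by rw [hsdef]; linarith⟩
    have hst : t₀ < s := by rw [hsdef]; linarith
    have hLs : W s ≤ L := by
      refine ge_of_tendsto hL ?_
      filter_upwards [Ioo_mem_nhdsLT_of_mem ⟨hsab.2, le_refl b⟩] with t ht
      exact (hWmono hsab ⟨lt_trans hsab.1 ht.1, ht.2⟩ ht.1).le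
    have := hWmono ht₀ab hsab hst
    linarith
  linarith

/-- Sturm comparison step of Proposition 2.2: for Fourier modes `n ≥ 2`, the
Dirichlet problem for the Jacobi equation on the catenoid `C_h` has only the
trivial solution. -/
theorem jacobi_mode_n_ge_two_trivial
    (h κ : ℝ) (hh : 0 < h) (hκ : 0 < κ) (n : ℕ) (hn : 2 ≤ n)
    (r r' r'' : ℝ → ℝ)
    (hrderiv : ∀ t ∈ Set.Icc (-h) h, HasDerivWithinAt r (r' t) (Set.Icc (-h) h) t)
    (hrderiv' : ∀ t ∈ Set.Icc (-h) h, HasDerivWithinAt r' (r'' t) (Set.Icc (-h) h) t)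
    (hrcont : ContinuousOn r'' (Set.Icc (-h) h))
    (hbv₁ : r (-h) = 1) (hbv₂ : r h = 1)
    (hrange : ∀ t ∈ Set.Ioo (-h) h, 0 < r t ∧ r t < 1)
    (hode : ∀ t ∈ Set.Ioo (-h) h,
      4 * r t * r'' t - 4 * (r' t) ^ 2 - (1 - (r t) ^ 4) = 0)
    (hfirst : ∀ t ∈ Set.Ioo (-h) h,
      (1 - (r t) ^ 2) ^ 2 / (4 * (r t) ^ 2) + (r' t / r t) ^ 2 = κ ^ 2)
    (u u' u'' : ℝ → ℝ)
    (hucont : ContinuousOn u (Set.Icc (-h) h))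
    (huderiv : ∀ t ∈ Set.Ioo (-h) h, HasDerivAt u (u' t) t)
    (huderiv' : ∀ t ∈ Set.Ioo (-h) h, HasDerivAt u' (u'' t) t)
    (hueq : ∀ t ∈ Set.Ioo (-h) h,
      u'' t + ((1 / 2) * (1 / (r t) ^ 2 + (r t) ^ 2) - κ ^ 2 * (n : ℝ) ^ 2) * u t = 0)
    (hu₁ : u (-h) = 0) (hu₂ : u h = 0) :
    ∀ t ∈ Set.Icc (-h) h, u t = 0 := by
  intro t ht
  by_contra hne
  have htIoo : t ∈ Set.Ioo (-h) h := by
    rcases eq_or_lt_of_le ht.1 with h1 | h1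
    · exact absurd (by rw [← h1]; exact hu₁) hne
    rcases eq_or_lt_of_le ht.2 with h2 | h2
    · exact absurd (by rw [h2]; exact hu₂) hne
    · exact ⟨h1, h2⟩
  rcases lt_or_gt_of_ne hne with hneg | hposs
  · exact jacobi_key h κ hh hκ n hn r r' r'' hrderiv hrderiv' hbv₁ hbv₂ hrange hode hfirst
      (fun s => -u s) (fun s => -u' s) (fun s => -u'' s)
      hucont.neg (fun s hs => (huderiv s hs).neg) (fun s hs => (huderiv' s hs).neg)
      (fun s hs => by linear_combination -hueq s hs)
      (by simp [hu₁]) (by simp [hu₂]) t htIoo (by simpa using hneg)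
  · exact jacobi_key h κ hh hκ n hn r r' r'' hrderiv hrderiv' hbv₁ hbv₂ hrange hode hfirst
      u u' u'' hucont huderiv huderiv' hueq hu₁ hu₂ t htIoo hposs
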